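/- Let F be a field of characteristic ≠ 2 and U = [u_{ij}] a 3×3 strictly lower triangular matrix over F such that u_{32} = 0 or 2u_{31} + u_{32}u_{21} = 0. Then A(U) ≅ A(0₃), i.e., A(U) is isomorphic to the commutative F-algebra generated by three elements that each square to zero. -/

import Mathlib

open scoped BigOperators

noncomputable section

variable {F : Type} [Field F]

/-- `T` is strictly lower triangular. -/
def SLT {n : ℕ} (T : Matrix (Fin n) (Fin n) F) : Prop :=
  ∀ i j : Fin n, i ≤ j → T i j = 0

/-- The ideal of relations defining the nil graded algebra `A(T)`:
`X i ^ 2 = ∑ j < i, T i j * X j * X i` (for `i = 0` the sum is empty, giving `X 0 ^ 2 = 0`). -/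
def ntIdeal {n : ℕ} (T : Matrix (Fin n) (Fin n) F) : Ideal (MvPolynomial (Fin n) F) :=
  Ideal.span {p | ∃ i : Fin n,
    p = MvPolynomial.X i ^ 2 -
      ∑ j ∈ Finset.univ.filter (fun j => j < i),
        MvPolynomial.C (T i j) * MvPolynomial.X j * MvPolynomial.X i}

/-- The nil graded algebra `A(T)` associated to the strictly lower triangular matrix `T`. -/
abbrev NTAlg {n : ℕ} (T : Matrix (Fin n) (Fin n) F) : Type :=
  MvPolynomial (Fin n) F ⧸ ntIdeal T

/-- The generator `X i` of `A(T)`. -/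
def ntGen {n : ℕ} (T : Matrix (Fin n) (Fin n) F) (i : Fin n) : NTAlg T :=
  Ideal.Quotient.mk (ntIdeal T) (MvPolynomial.X i)

/-- There is a degree-preserving isomorphism `A(T) → A(S)`, i.e. an algebra isomorphism
sending each generator to an `F`-linear combination of the generators of the target. -/
def NTIso {n : ℕ} (T S : Matrix (Fin n) (Fin n) F) : Prop :=
  ∃ e : NTAlg T ≃ₐ[F] NTAlg S, ∃ Γ : Matrix (Fin n) (Fin n) F,
    ∀ j : Fin n, e (ntGen T j) = ∑ i : Fin n, Γ i j • ntGen S i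

lemma ntRel {n : ℕ} (T : Matrix (Fin n) (Fin n) F) (i : Fin n) :
    ntGen T i ^ 2 = ∑ j ∈ Finset.univ.filter (fun j => j < i),
      algebraMap F (NTAlg T) (T i j) * ntGen T j * ntGen T i := by
  have hmem : (MvPolynomial.X i ^ 2 -
      ∑ j ∈ Finset.univ.filter (fun j => j < i),
        MvPolynomial.C (T i j) * MvPolynomial.X j * MvPolynomial.X i) ∈ ntIdeal T :=
    Ideal.subset_span ⟨i, rfl⟩
  have h0 := (Ideal.Quotient.eq_zero_iff_mem).mpr hmem
  rw [map_sub, sub_eq_zero, map_pow, map_sum] at h0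
  simp only [map_mul, ← MvPolynomial.algebraMap_eq, Ideal.Quotient.mk_algebraMap] at h0
  exact h0

lemma nt_smul {n : ℕ} (T : Matrix (Fin n) (Fin n) F) (a : F) (m : NTAlg T) :
    a • m = algebraMap F (NTAlg T) a * m :=
  Algebra.smul_def a m

set_option maxHeartbeats 1000000 in
set_option synthInstance.maxHeartbeats 1000000 in
/-- If `u₃₂ = 0` or `2u₃₁ + u₃₂u₂₁ = 0`, then `A(U) ≅ A(0₃)`. -/
theorem stmt10 (h2 : (2 : F) ≠ 0) (U : Matrix (Fin 3) (Fin 3) F) (hU : SLT U)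
    (h : U 2 1 = 0 ∨ 2 * U 2 0 + U 2 1 * U 1 0 = 0) :
    NTIso U (0 : Matrix (Fin 3) (Fin 3) F) := by
  classical
  obtain ⟨c, hc⟩ : ∃ c : F, U 1 0 = 2 * c := ⟨U 1 0 / 2, by field_simp⟩
  obtain ⟨α, hα⟩ : ∃ a : F, U 2 0 = 2 * a := ⟨U 2 0 / 2, by field_simp⟩
  obtain ⟨β, hβ⟩ : ∃ b : F, U 2 1 = 2 * b := ⟨U 2 1 / 2, by field_simp⟩
  have hk : β * α + β * β * c = 0 := by
    rcases h with hh | hh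
    · have hb : β = 0 := by
        apply mul_left_cancel₀ h2
        rw [← hβ, hh, mul_zero]
      rw [hb]; ring
    · rw [hc, hα, hβ] at hh
      have h8 : (8 : F) ≠ 0 := by
        have : (8:F) = 2*2*2 := by norm_num
        rw [this]; exact mul_ne_zero (mul_ne_zero h2 h2) h2
      apply mul_left_cancel₀ h8
      linear_combination 2 * β * hh
  have f0 : (Finset.univ.filter (fun j => j < (0:Fin 3))) = ∅ := by decide
  have f1 : (Finset.univ.filter (fun j => j < (1:Fin 3))) = {0} := by decide
  have f2 : (Finset.univ.filter (fun j => j < (2:Fin 3))) = ({0,1} : Finset (Fin 3)) := by decide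
  set z : Fin 3 → NTAlg (0 : Matrix (Fin 3) (Fin 3) F) := ntGen 0 with hzdef
  set x : Fin 3 → NTAlg U := ntGen U with hxdef
  set ψ : F →+* NTAlg (0 : Matrix (Fin 3) (Fin 3) F) :=
    (algebraMap F (NTAlg (0 : Matrix (Fin 3) (Fin 3) F))) with hψdef
  set φ : F →+* NTAlg U := (algebraMap F (NTAlg U)) with hφdef
  have hz : ∀ i : Fin 3, z i ^ 2 = 0 := by
    intro i
    have h0 := ntRel (0 : Matrix (Fin 3) (Fin 3) F) i
    simp only [Matrix.zero_apply, map_zero, zero_mul, Finset.sum_const_zero] at h0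
    exact h0
  have hx0 : x 0 ^ 2 = 0 := by
    have h0 := ntRel U 0
    rw [f0, Finset.sum_empty] at h0
    exact h0
  have hx1 : x 1 ^ 2 = 2 * φ c * x 0 * x 1 := by
    have h0 := ntRel U 1
    rw [f1, Finset.sum_singleton, hc] at h0
    rw [h0, map_mul, map_ofNat]
  have hx2 : x 2 ^ 2 = 2 * φ α * x 0 * x 2 + 2 * φ β * x 1 * x 2 := by
    have h0 := ntRel U 2
    rw [f2, Finset.sum_pair (by decide : (0:Fin 3) ≠ 1), hα, hβ] at h0
    rw [h0, map_mul, map_mul, map_ofNat]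
  have hψk : ψ β * ψ α + ψ β * ψ β * ψ c = 0 := by
    rw [← map_mul, ← map_mul, ← map_mul, ← map_add, hk, map_zero]
  have hφk : φ β * φ α + φ β * φ β * φ c = 0 := by
    rw [← map_mul, ← map_mul, ← map_mul, ← map_add, hk, map_zero]
  set t : Fin 3 → NTAlg (0 : Matrix (Fin 3) (Fin 3) F) :=
    ![z 0, z 1 + ψ c * z 0, z 2 + (ψ α + ψ β * ψ c) * z 0 + ψ β * z 1] with ht
  set s : Fin 3 → NTAlg U := ![x 0, x 1 - φ c * x 0, x 2 - φ α * x 0 - φ β * x 1] with hs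
  have hkerT : ∀ p ∈ ntIdeal U,
      (MvPolynomial.aeval t : MvPolynomial (Fin 3) F →ₐ[F] NTAlg (0 : Matrix (Fin 3) (Fin 3) F)) p = 0 := by
    have hle : ntIdeal U ≤ RingHom.ker ((MvPolynomial.aeval t :
        MvPolynomial (Fin 3) F →ₐ[F] NTAlg (0 : Matrix (Fin 3) (Fin 3) F)).toRingHom) := by
      rw [ntIdeal, Ideal.span_le]
      rintro p ⟨i, rfl⟩
      simp only [SetLike.mem_coe, RingHom.mem_ker, AlgHom.toRingHom_eq_coe, RingHom.coe_coe,
        map_sub, map_pow, map_sum, map_mul, MvPolynomial.aeval_X, MvPolynomial.aeval_C]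
      fin_cases i
      · simp only [Fin.zero_eta, Fin.mk_one, Fin.reduceFinMk]
        rw [f0, Finset.sum_empty, sub_zero]
        show t 0 ^ 2 = 0
        simp only [ht, Matrix.cons_val_zero]
        exact hz 0
      · simp only [Fin.zero_eta, Fin.mk_one, Fin.reduceFinMk]
        rw [f1, Finset.sum_singleton, hc, map_mul, map_ofNat]
        show t 1 ^ 2 - 2 * ψ c * t 0 * t 1 = 0
        simp only [ht, Matrix.cons_val_zero, Matrix.cons_val_one, Matrix.head_cons]
        linear_combination hz 1 - (ψ c)^2 * hz 0
      · simp only [Fin.zero_eta, Fin.mk_one, Fin.reduceFinMk]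
        rw [f2, Finset.sum_pair (by decide : (0:Fin 3) ≠ 1), hα, hβ, map_mul, map_mul, map_ofNat]
        show t 2 ^ 2 - (2 * ψ α * t 0 * t 2 + 2 * ψ β * t 1 * t 2) = 0
        simp only [ht, Matrix.cons_val_zero, Matrix.cons_val_one, Matrix.head_cons,
          Matrix.cons_val_two, Matrix.tail_cons]
        linear_combination hz 2 - (ψ α + ψ β * ψ c)^2 * hz 0 - (ψ β)^2 * hz 1
          - 2 * (z 0 * z 1) * hψk
    intro p hp
    exact hle hp
  have hkerS : ∀ p ∈ ntIdeal (0 : Matrix (Fin 3) (Fin 3) F),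
      (MvPolynomial.aeval s : MvPolynomial (Fin 3) F →ₐ[F] NTAlg U) p = 0 := by
    have hle : ntIdeal (0 : Matrix (Fin 3) (Fin 3) F) ≤ RingHom.ker ((MvPolynomial.aeval s :
        MvPolynomial (Fin 3) F →ₐ[F] NTAlg U).toRingHom) := by
      rw [ntIdeal, Ideal.span_le]
      rintro p ⟨i, rfl⟩
      simp only [SetLike.mem_coe, RingHom.mem_ker, AlgHom.toRingHom_eq_coe, RingHom.coe_coe,
        Matrix.zero_apply, map_zero, zero_mul, Finset.sum_const_zero, sub_zero,
        map_pow, MvPolynomial.aeval_X]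
      fin_cases i
      · show s 0 ^ 2 = 0
        simp only [hs, Matrix.cons_val_zero]
        exact hx0
      · show s 1 ^ 2 = 0
        simp only [hs, Matrix.cons_val_zero, Matrix.cons_val_one, Matrix.head_cons]
        linear_combination hx1 + (φ c)^2 * hx0
      · show s 2 ^ 2 = 0
        simp only [hs, Matrix.cons_val_zero, Matrix.cons_val_one, Matrix.head_cons,
          Matrix.cons_val_two, Matrix.tail_cons]
        linear_combination hx2 + (φ α)^2 * hx0 + (φ β)^2 * hx1 + 2 * (x 0 * x 1) * hφk
    intro p hp
    exact hle hp
  set eU : NTAlg U →ₐ[F] NTAlg (0 : Matrix (Fin 3) (Fin 3) F) :=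
    Ideal.Quotient.liftₐ (ntIdeal U) (MvPolynomial.aeval t) hkerT with heU
  set eZ : NTAlg (0 : Matrix (Fin 3) (Fin 3) F) →ₐ[F] NTAlg U :=
    Ideal.Quotient.liftₐ (ntIdeal (0 : Matrix (Fin 3) (Fin 3) F)) (MvPolynomial.aeval s) hkerS with heZ
  have heUmk : ∀ p, eU (Ideal.Quotient.mk (ntIdeal U) p) = MvPolynomial.aeval t p := by
    intro p
    rw [heU, Ideal.Quotient.liftₐ_apply]
    rfl
  have heZmk : ∀ p, eZ (Ideal.Quotient.mk (ntIdeal (0 : Matrix (Fin 3) (Fin 3) F)) p)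
      = MvPolynomial.aeval s p := by
    intro p
    rw [heZ, Ideal.Quotient.liftₐ_apply]
    rfl
  have hx_eU : ∀ j, eU (x j) = t j := by
    intro j
    rw [hxdef]
    show eU (Ideal.Quotient.mk (ntIdeal U) (MvPolynomial.X j)) = t j
    rw [heUmk, MvPolynomial.aeval_X]
  have hz_eZ : ∀ j, eZ (z j) = s j := by
    intro j
    rw [hzdef]
    show eZ (Ideal.Quotient.mk (ntIdeal (0 : Matrix (Fin 3) (Fin 3) F)) (MvPolynomial.X j)) = s j
    rw [heZmk, MvPolynomial.aeval_X]
  have hcomp1 : eU.comp eZ = AlgHom.id F (NTAlg (0 : Matrix (Fin 3) (Fin 3) F)) := by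
    apply Ideal.Quotient.algHom_ext
    apply MvPolynomial.algHom_ext
    intro i
    simp only [AlgHom.comp_apply, Ideal.Quotient.mkₐ_eq_mk, AlgHom.id_apply]
    rw [heZmk, MvPolynomial.aeval_X]
    fin_cases i
    · show eU (s 0) = z 0
      simp only [hs, Matrix.cons_val_zero]
      rw [hx_eU]
      simp only [ht, Matrix.cons_val_zero]
    · show eU (s 1) = z 1
      simp only [hs, Matrix.cons_val_zero, Matrix.cons_val_one, Matrix.head_cons]
      rw [map_sub, map_mul, hx_eU, hx_eU]
      have : eU (φ c) = ψ c := eU.commutes c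
      rw [this]
      simp only [ht, Matrix.cons_val_zero, Matrix.cons_val_one, Matrix.head_cons]
      ring
    · show eU (s 2) = z 2
      simp only [hs, Matrix.cons_val_zero, Matrix.cons_val_one, Matrix.head_cons,
        Matrix.cons_val_two, Matrix.tail_cons]
      rw [map_sub, map_sub, map_mul, map_mul, hx_eU, hx_eU, hx_eU,
        show eU (φ α) = ψ α from eU.commutes α, show eU (φ β) = ψ β from eU.commutes β]
      simp only [ht, Matrix.cons_val_zero, Matrix.cons_val_one, Matrix.head_cons,
        Matrix.cons_val_two, Matrix.tail_cons]
      ring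
  have hcomp2 : eZ.comp eU = AlgHom.id F (NTAlg U) := by
    apply Ideal.Quotient.algHom_ext
    apply MvPolynomial.algHom_ext
    intro i
    simp only [AlgHom.comp_apply, Ideal.Quotient.mkₐ_eq_mk, AlgHom.id_apply]
    rw [heUmk, MvPolynomial.aeval_X]
    fin_cases i
    · show eZ (t 0) = x 0
      simp only [ht, Matrix.cons_val_zero]
      rw [hz_eZ]
      simp only [hs, Matrix.cons_val_zero]
    · show eZ (t 1) = x 1
      simp only [ht, Matrix.cons_val_zero, Matrix.cons_val_one, Matrix.head_cons]
      rw [map_add, map_mul, hz_eZ, hz_eZ, show eZ (ψ c) = φ c from eZ.commutes c]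
      simp only [hs, Matrix.cons_val_zero, Matrix.cons_val_one, Matrix.head_cons]
      ring
    · show eZ (t 2) = x 2
      simp only [ht, Matrix.cons_val_zero, Matrix.cons_val_one, Matrix.head_cons,
        Matrix.cons_val_two, Matrix.tail_cons]
      rw [map_add, map_add, map_mul, map_mul, map_add, map_mul, hz_eZ, hz_eZ, hz_eZ,
        show eZ (ψ c) = φ c from eZ.commutes c,
        show eZ (ψ α) = φ α from eZ.commutes α,
        show eZ (ψ β) = φ β from eZ.commutes β]
      simp only [hs, Matrix.cons_val_zero, Matrix.cons_val_one, Matrix.head_cons,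
        Matrix.cons_val_two, Matrix.tail_cons]
      ring
  refine ⟨AlgEquiv.ofAlgHom eU eZ hcomp1 hcomp2,
    Matrix.of ![![1, c, α + β * c], ![0, 1, β], ![0, 0, 1]], ?_⟩
  intro j
  show eU (ntGen U j) = _
  rw [← hxdef, hx_eU]
  fin_cases j <;>
    simp only [Fin.sum_univ_three, Matrix.of_apply, Fin.zero_eta, Fin.mk_one,
      Fin.reduceFinMk, Fin.isValue, Matrix.cons_val_zero, Matrix.cons_val_one,
      Matrix.head_cons, Matrix.cons_val_two, Matrix.tail_cons, one_smul, zero_smul,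
      nt_smul, map_add, map_mul, add_zero] <;>
    rw [ht] <;>
    simp only [Matrix.cons_val_zero, Matrix.cons_val_one, Matrix.head_cons,
      Matrix.cons_val_two, Matrix.tail_cons, hzdef, hψdef, map_one, map_zero,
      one_mul, zero_mul, mul_one, add_zero, zero_add] <;>
    ring
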